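/- Suppose F (defined from a partition M = D + Δ with ‖G‖‖Δ‖ < 3 − 2√2) has a unique fixed point Z* in the ball B_{√2}(I), and suppose some column of Z* is an eigenvector of M lying in an eigenspace of M of dimension at least 2. Then F has infinitely many fixed points in B_{√2}(I) — contradiction; hence no column of Z* lies in an eigenspace of dimension greater than one. -/

import Mathlib

open Matrix
open scoped Matrix.Norms.L2Operator

set_option linter.unusedSectionVars false
set_option maxHeartbeats 1000000

namespace IPTAux

variable {m l : Type*} [Fintype m] [Fintype l] [DecidableEq m] [DecidableEq l]

lemma euclid_norm (v : m → ℂ) :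
    ‖(EuclideanSpace.equiv m ℂ).symm v‖ = Real.sqrt (∑ j, ‖v j‖^2) := by
  rw [EuclideanSpace.norm_eq]; rfl

lemma opNorm_le (A : Matrix m l ℂ) {c : ℝ} (hc : 0 ≤ c)
    (h : ∀ x : l → ℂ, (∑ j, ‖(A *ᵥ x) j‖^2) ≤ c^2 * (∑ k, ‖x k‖^2)) :
    ‖A‖ ≤ c := by
  rw [Matrix.l2_opNorm_def]
  refine ContinuousLinearMap.opNorm_le_bound _ hc fun x => ?_
  have hx : ‖x‖ = Real.sqrt (∑ k, ‖x k‖^2) := EuclideanSpace.norm_eq x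
  have h2 : ‖(EuclideanSpace.equiv m ℂ).symm (A *ᵥ (x : l → ℂ))‖
      ≤ c * ‖x‖ := by
    rw [euclid_norm, hx, ← Real.sqrt_sq hc, ← Real.sqrt_mul (sq_nonneg c)]
    exact Real.sqrt_le_sqrt (h x)
  exact h2

lemma col_sq_le (A : Matrix m l ℂ) (k : l) : (∑ j, ‖A j k‖^2) ≤ ‖A‖^2 := by
  have h := Matrix.l2_opNorm_mulVec A (EuclideanSpace.single k (1:ℂ))
  rw [EuclideanSpace.norm_single, euclid_norm] at h
  have hv : A *ᵥ ((EuclideanSpace.single k (1:ℂ)) : l → ℂ) = fun j => A j k := by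
    have : ((EuclideanSpace.single k (1:ℂ)) : l → ℂ) = Pi.single k 1 := rfl
    rw [this, Matrix.mulVec_single]
    simp
    rfl
  rw [hv] at h
  simp only [norm_one, mul_one] at h
  calc (∑ j, ‖A j k‖^2) = Real.sqrt (∑ j, ‖A j k‖^2)^2 := by
        rw [Real.sq_sqrt (Finset.sum_nonneg fun _ _ => sq_nonneg _)]
    _ ≤ ‖A‖^2 := by
        have := Real.sqrt_nonneg (∑ j, ‖A j k‖^2)
        nlinarith [norm_nonneg A]

lemma row_sq_le (A : Matrix m l ℂ) (j : m) : (∑ k, ‖A j k‖^2) ≤ ‖A‖^2 := by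
  have h := col_sq_le Aᴴ j
  rw [Matrix.l2_opNorm_conjTranspose] at h
  simpa [Matrix.conjTranspose_apply] using h

lemma entry_le (A : Matrix m l ℂ) (j : m) (k : l) : ‖A j k‖ ≤ ‖A‖ := by
  have h := col_sq_le A k
  have h1 : ‖A j k‖^2 ≤ ∑ j', ‖A j' k‖^2 :=
    Finset.single_le_sum (f := fun j' => ‖A j' k‖^2) (fun _ _ => sq_nonneg _) (Finset.mem_univ j)
  nlinarith [norm_nonneg (A j k), norm_nonneg A]

lemma diagonal_norm_le (d : m → ℂ) {b : ℝ} (hb : 0 ≤ b) (h : ∀ k, ‖d k‖ ≤ b) :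
    ‖Matrix.diagonal d‖ ≤ b := by
  refine opNorm_le _ hb fun x => ?_
  rw [Finset.mul_sum]
  refine Finset.sum_le_sum fun j _ => ?_
  rw [Matrix.mulVec_diagonal, norm_mul, mul_pow]
  exact mul_le_mul_of_nonneg_right (by nlinarith [h j, norm_nonneg (d j)]) (sq_nonneg _)

lemma one_norm_le : ‖(1 : Matrix m m ℂ)‖ ≤ 1 := by
  refine opNorm_le _ zero_le_one fun x => by rw [Matrix.one_mulVec]; norm_num

lemma hadamard_norm_le (A B : Matrix m l ℂ) : ‖A ⊙ B‖ ≤ ‖A‖ * ‖B‖ := by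
  refine opNorm_le _ (mul_nonneg (norm_nonneg A) (norm_nonneg B)) fun x => ?_
  have key : ∀ j, ‖((A ⊙ B) *ᵥ x) j‖^2 ≤ ‖A‖^2 * ∑ k, ‖B j k‖^2 * ‖x k‖^2 := by
    intro j
    have h1 : ‖((A ⊙ B) *ᵥ x) j‖ ≤ ∑ k, ‖A j k‖ * (‖B j k‖ * ‖x k‖) := by
      rw [Matrix.mulVec, dotProduct]
      refine (norm_sum_le _ _).trans ?_
      refine Finset.sum_le_sum fun k _ => ?_
      rw [Matrix.hadamard_apply]
      rw [norm_mul, norm_mul]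
      ring_nf; exact le_refl _
    have h2 : (∑ k, ‖A j k‖ * (‖B j k‖ * ‖x k‖))^2
        ≤ (∑ k, ‖A j k‖^2) * ∑ k, (‖B j k‖ * ‖x k‖)^2 :=
      Finset.sum_mul_sq_le_sq_mul_sq _ _ _
    have h3 : (∑ k, ‖A j k‖^2) ≤ ‖A‖^2 := row_sq_le A j
    have hnn : (0:ℝ) ≤ ∑ k, (‖B j k‖ * ‖x k‖)^2 :=
      Finset.sum_nonneg fun _ _ => sq_nonneg _
    calc ‖((A ⊙ B) *ᵥ x) j‖^2 ≤ (∑ k, ‖A j k‖ * (‖B j k‖ * ‖x k‖))^2 := by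
          have hs : (0:ℝ) ≤ ∑ k, ‖A j k‖ * (‖B j k‖ * ‖x k‖) :=
            Finset.sum_nonneg fun _ _ => mul_nonneg (norm_nonneg _)
              (mul_nonneg (norm_nonneg _) (norm_nonneg _))
          nlinarith [norm_nonneg (((A ⊙ B) *ᵥ x) j)]
      _ ≤ (∑ k, ‖A j k‖^2) * ∑ k, (‖B j k‖ * ‖x k‖)^2 := h2
      _ ≤ ‖A‖^2 * ∑ k, (‖B j k‖ * ‖x k‖)^2 := mul_le_mul_of_nonneg_right h3 hnn
      _ = ‖A‖^2 * ∑ k, ‖B j k‖^2 * ‖x k‖^2 := by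
          congr 1; exact Finset.sum_congr rfl fun k _ => by ring
  calc (∑ j, ‖((A ⊙ B) *ᵥ x) j‖^2) ≤ ∑ j, ‖A‖^2 * ∑ k, ‖B j k‖^2 * ‖x k‖^2 :=
        Finset.sum_le_sum fun j _ => key j
    _ = ‖A‖^2 * ∑ k, (∑ j, ‖B j k‖^2) * ‖x k‖^2 := by
        rw [← Finset.mul_sum, Finset.sum_comm]
        congr 1; exact Finset.sum_congr rfl fun k _ => by rw [Finset.sum_mul]
    _ ≤ ‖A‖^2 * ∑ k, ‖B‖^2 * ‖x k‖^2 := by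
        refine mul_le_mul_of_nonneg_left (Finset.sum_le_sum fun k _ =>
          mul_le_mul_of_nonneg_right (col_sq_le B k) (sq_nonneg _)) (sq_nonneg _)
    _ = (‖A‖ * ‖B‖)^2 * ∑ k, ‖x k‖^2 := by rw [← Finset.mul_sum]; ring

end IPTAux

/-- Under the contraction condition `‖G‖‖Δ‖ < 3 − 2√2`, if `Zs` is the unique fixed
point of the IPT map `F` in the closed ball `B_{√2}(I)`, then no column of `Zs` is an
eigenvector of `M = D + Δ` lying in an eigenspace of dimension at least `2`. -/
theorem IPT_fixed_point_no_multidimensional_eigenspace {n : ℕ} [NeZero n]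
    (ε : Fin n → ℂ) (hdist : Function.Injective ε) (Δ : Matrix (Fin n) (Fin n) ℂ)
    (G : Matrix (Fin n) (Fin n) ℂ)
    (hG : G = Matrix.of fun j k => if j = k then 0 else (ε j - ε k)⁻¹)
    (F : Matrix (Fin n) (Fin n) ℂ → Matrix (Fin n) (Fin n) ℂ)
    (hF : F = fun Z => 1 + G ⊙ (Z * Matrix.diagonal (fun i => (Δ * Z) i i) - Δ * Z))
    (hsmall : ‖G‖ * ‖Δ‖ < 3 - 2 * Real.sqrt 2)
    (Zs : Matrix (Fin n) (Fin n) ℂ)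
    (hmem : Zs ∈ Metric.closedBall (1 : Matrix (Fin n) (Fin n) ℂ) (Real.sqrt 2))
    (hfix : F Zs = Zs)
    (huniq : ∀ W ∈ Metric.closedBall (1 : Matrix (Fin n) (Fin n) ℂ) (Real.sqrt 2),
      F W = W → W = Zs) :
    ∀ (i : Fin n) (μ : ℂ),
      (Matrix.diagonal ε + Δ).mulVec (fun j => Zs j i) = μ • (fun j => Zs j i) →
      ¬ 2 ≤ Module.finrank ℂ
          (Module.End.eigenspace (Matrix.diagonal ε + Δ).mulVecLin μ) := by
  intro i μ hcol h2
  have hs2 : (Real.sqrt 2)^2 = 2 := Real.sq_sqrt (by norm_num)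
  have hs2nn : 0 ≤ Real.sqrt 2 := Real.sqrt_nonneg 2
  have hs2lt : Real.sqrt 2 < 3/2 := by nlinarith
  -- G has zero diagonal
  have hGdiag : ∀ j, G j j = 0 := fun j => by rw [hG]; simp
  -- diagonal entries of Zs are 1
  have hZdiag : Zs i i = 1 := by
    have h := congrFun (congrFun hfix i) i
    rw [hF] at h
    have h2 : (1 : ℂ) + G i i * ((Zs * Matrix.diagonal fun l => (Δ * Zs) l l) i i - (Δ * Zs) i i) = Zs i i := by
      simpa [Matrix.add_apply, Matrix.hadamard_apply, Matrix.one_apply_eq] using h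
    rw [hGdiag i] at h2
    simpa using h2.symm
  -- strict bound ‖Zs - 1‖ < √2
  have hmem' : ‖Zs - 1‖ ≤ Real.sqrt 2 := by
    rw [← dist_eq_norm]; exact Metric.mem_closedBall.mp hmem
  have hZnorm : ‖Zs‖ ≤ 1 + Real.sqrt 2 := by
    calc ‖Zs‖ = ‖(Zs - 1) + 1‖ := by rw [sub_add_cancel]
      _ ≤ ‖Zs - 1‖ + ‖(1 : Matrix (Fin n) (Fin n) ℂ)‖ := norm_add_le _ _
      _ ≤ Real.sqrt 2 + 1 := add_le_add hmem' IPTAux.one_norm_le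
      _ = 1 + Real.sqrt 2 := by ring
  have hrlt : ‖Zs - 1‖ < Real.sqrt 2 := by
    have hXeq : Zs - 1
        = G ⊙ (Zs * Matrix.diagonal (fun k => (Δ * Zs) k k) - Δ * Zs) := by
      have h := hfix
      rw [hF] at h
      exact sub_eq_of_eq_add' h.symm
    have hdZ : ‖Δ * Zs‖ ≤ ‖Δ‖ * ‖Zs‖ := Matrix.l2_opNorm_mul Δ Zs
    have hdiagb : ‖Matrix.diagonal (fun k => (Δ * Zs) k k)‖ ≤ ‖Δ‖ * ‖Zs‖ :=
      IPTAux.diagonal_norm_le _ (le_trans (norm_nonneg _) hdZ)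
        (fun k => le_trans (IPTAux.entry_le (Δ * Zs) k k) hdZ)
    have hin : ‖Zs * Matrix.diagonal (fun k => (Δ * Zs) k k) - Δ * Zs‖
        ≤ ‖Zs‖ * (‖Δ‖ * ‖Zs‖) + ‖Δ‖ * ‖Zs‖ := by
      refine (norm_sub_le _ _).trans (add_le_add ?_ hdZ)
      exact (Matrix.l2_opNorm_mul _ _).trans
        (mul_le_mul_of_nonneg_left hdiagb (norm_nonneg _))
    have hr : ‖Zs - 1‖ ≤ ‖G‖ * (‖Zs‖ * (‖Δ‖ * ‖Zs‖) + ‖Δ‖ * ‖Zs‖) := by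
      rw [hXeq]
      exact (IPTAux.hadamard_norm_le _ _).trans
        (mul_le_mul_of_nonneg_left hin (norm_nonneg _))
    have hGnn : 0 ≤ ‖G‖ := norm_nonneg _
    have hDnn : 0 ≤ ‖Δ‖ := norm_nonneg _
    have hZnn : 0 ≤ ‖Zs‖ := norm_nonneg _
    nlinarith [mul_nonneg hGnn hDnn, sq_nonneg (‖Zs‖ - (1 + Real.sqrt 2)),
      mul_le_mul_of_nonneg_left hZnorm (mul_nonneg hGnn hDnn)]
  -- find eigenvector u with u i = 0, u ≠ 0
  set M : Matrix (Fin n) (Fin n) ℂ := Matrix.diagonal ε + Δ with hM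
  set V := Module.End.eigenspace M.mulVecLin μ with hV
  have hφ : ∃ u : Fin n → ℂ, u ∈ V ∧ u i = 0 ∧ u ≠ 0 := by
    let φ : V →ₗ[ℂ] ℂ := (LinearMap.proj i).comp V.subtype
    have hrange : Module.finrank ℂ (LinearMap.range φ) ≤ 1 := by
      simpa using Submodule.finrank_le (LinearMap.range φ)
    have hrk := LinearMap.finrank_range_add_finrank_ker φ
    have hkerpos : 0 < Module.finrank ℂ (LinearMap.ker φ) := by omega
    have hkerne : LinearMap.ker φ ≠ ⊥ := by
      intro hbot
      rw [hbot, finrank_bot] at hkerpos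
      exact lt_irrefl 0 hkerpos
    obtain ⟨u', hu'mem, hu'ne⟩ := Submodule.exists_mem_ne_zero_of_ne_bot hkerne
    refine ⟨(u' : Fin n → ℂ), u'.2, ?_, ?_⟩
    · simpa [φ] using hu'mem
    · simpa [Submodule.coe_eq_zero] using hu'ne
  obtain ⟨u, huV, hui, hune⟩ := hφ
  have hueig : M *ᵥ u = μ • u := by
    have := Module.End.mem_eigenspace_iff.mp huV
    rwa [Matrix.mulVecLin_apply] at this
  -- construct the perturbed fixed point
  set E : Matrix (Fin n) (Fin n) ℂ := Matrix.of (fun j k => if k = i then u j else 0) with hE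
  have hEne : E ≠ 0 := by
    obtain ⟨j, hj⟩ := Function.ne_iff.mp hune
    intro h0
    exact hj (by simpa [hE] using congrFun (congrFun h0 j) i)
  set t : ℝ := (Real.sqrt 2 - ‖Zs - 1‖) / (‖E‖ + 1) with ht
  have hEpos : (0:ℝ) < ‖E‖ + 1 := by positivity
  have htpos : 0 < t := div_pos (by linarith) hEpos
  set W : Matrix (Fin n) (Fin n) ℂ := Zs + (t : ℂ) • E with hW
  -- the column c of W
  set c : Fin n → ℂ := fun j => Zs j i + (t : ℂ) * u j with hc
  have hWapp : ∀ j k, W j k = if k = i then c j else Zs j k := by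
    intro j k
    by_cases hk : k = i <;> simp [hW, hE, hc, hk, Matrix.add_apply, Matrix.smul_apply,
      smul_eq_mul]
  have hci : c i = 1 := by simp [hc, hui, hZdiag]
  have hceig : M *ᵥ c = μ • c := by
    have hcv : c = (fun j => Zs j i) + (t : ℂ) • u := by
      funext j; simp [hc, smul_eq_mul]
    rw [hcv, Matrix.mulVec_add, Matrix.mulVec_smul, hcol, hueig]
    funext j
    simp [smul_eq_mul]
    ring
  have hΔc : ∀ j, ∑ l, Δ j l * c l = (μ - ε j) * c j := by
    intro j
    have h := congrFun hceig j
    rw [hM, Matrix.add_mulVec] at h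
    have hd : (Matrix.diagonal ε *ᵥ c) j = ε j * c j := Matrix.mulVec_diagonal _ _ _
    simp only [Pi.add_apply, Pi.smul_apply, smul_eq_mul] at h
    rw [hd] at h
    have hsum : (Δ *ᵥ c) j = ∑ l, Δ j l * c l := rfl
    rw [hsum] at h
    linear_combination h
  -- ΔW entries
  have hΔW : ∀ j k, (Δ * W) j k = if k = i then (μ - ε j) * c j else (Δ * Zs) j k := by
    intro j k
    by_cases hk : k = i
    · subst hk
      rw [if_pos rfl, ← hΔc j, Matrix.mul_apply]
      exact Finset.sum_congr rfl fun l _ => by rw [hWapp l k, if_pos rfl]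
    · rw [if_neg hk, Matrix.mul_apply, Matrix.mul_apply]
      exact Finset.sum_congr rfl fun l _ => by rw [hWapp l k, if_neg hk]
  -- F W = W
  have hfixW : F W = W := by
    funext j k
    rw [hF]
    simp only [Matrix.add_apply, Matrix.hadamard_apply, Matrix.sub_apply,
      Matrix.mul_diagonal]
    by_cases hk : k = i
    · subst hk
      rw [hΔW j k, hΔW k k, hWapp j k, hci]
      simp only [if_pos rfl]
      by_cases hj : j = k
      · subst hj
        rw [hGdiag j, Matrix.one_apply_eq, hci]
        simp
      · have hne : ε j - ε k ≠ 0 := sub_ne_zero.mpr (fun h => hj (hdist h))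
        rw [hG]
        simp only [Matrix.of_apply, if_neg hj, Matrix.one_apply_ne hj, ↓reduceIte]
        field_simp
        ring
    · rw [hΔW j k, hΔW k k, hWapp j k]
      simp only [if_neg hk]
      have hzs := congrFun (congrFun hfix j) k
      rw [hF] at hzs
      simpa [Matrix.add_apply, Matrix.hadamard_apply, Matrix.sub_apply,
        Matrix.mul_diagonal] using hzs
  -- W is in the ball
  have hmemW : W ∈ Metric.closedBall (1 : Matrix (Fin n) (Fin n) ℂ) (Real.sqrt 2) := by
    rw [Metric.mem_closedBall, dist_eq_norm]
    have hW1 : W - 1 = (Zs - 1) + (t : ℂ) • E := by rw [hW]; abel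
    rw [hW1]
    have hsm : ‖(t : ℂ) • E‖ = t * ‖E‖ := by
      rw [norm_smul, Complex.norm_real, Real.norm_of_nonneg htpos.le]
    calc ‖(Zs - 1) + (t : ℂ) • E‖ ≤ ‖Zs - 1‖ + ‖(t : ℂ) • E‖ := norm_add_le _ _
      _ = ‖Zs - 1‖ + t * ‖E‖ := by rw [hsm]
      _ ≤ ‖Zs - 1‖ + t * (‖E‖ + 1) := by nlinarith
      _ = ‖Zs - 1‖ + (Real.sqrt 2 - ‖Zs - 1‖) := by
          rw [ht, div_mul_cancel₀ _ (ne_of_gt hEpos)]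
      _ = Real.sqrt 2 := by ring
  -- contradiction
  have hWZ : W = Zs := huniq W hmemW hfixW
  have hsmul0 : (t : ℂ) • E = 0 := by
    have h := hWZ
    rw [hW] at h
    exact add_eq_left.mp h
  rcases smul_eq_zero.mp hsmul0 with h | h
  · exact Complex.ofReal_ne_zero.mpr htpos.ne' h
  · exact hEne h
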